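/- arXiv:2109.01062 — 2 statements merged into one kernel-verified Lean document; each statement's English description precedes it below -/
import Mathlib

section
/- Let Y be a nonnegatively graded chain complex of abelian groups and let DK(Y)_n = ⊕_α Y_k (sum over injective order maps α : [k] → [n] with α(0)=0). An element x ∈ DK(Y)_n lies in the kernel of d_i (for i > 0) if and only if π_α(x) = 0 for all indices α not containing i in their image. -/
open CategoryTheory SimplexCategory

variable (Y : ℕ → Type) [∀ k, AddCommGroup (Y k)]

/-- Indices of the DK direct sum: injective order-preserving maps `[k] → [n]` with `α 0 = 0`. -/
def DKIdx (n : ℕ) : Type :=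
  {p : Σ k : ℕ, SimplexCategory.mk k ⟶ SimplexCategory.mk n //
    Function.Injective p.2.toOrderHom ∧ p.2.toOrderHom 0 = 0}

/-- The `n`-simplex abelian group `DK(Y)_n = ⊕_α Y_k`. -/
def DK (n : ℕ) : Type := ∀ p : DKIdx n, Y p.1.1

instance (n : ℕ) : AddCommGroup (DK Y n) :=
  inferInstanceAs (AddCommGroup (∀ p : DKIdx n, Y p.1.1))

/-- Projection `π_γ`, with the convention `π_γ = 0` for `γ` not injective (or not 0-preserving). -/
def DKproj {n l : ℕ} (γ : SimplexCategory.mk l ⟶ SimplexCategory.mk n) (x : DK Y n) : Y l :=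
  if h : Function.Injective γ.toOrderHom ∧ γ.toOrderHom 0 = 0 then x ⟨⟨l, γ⟩, h⟩ else 0

/-- Pullback `θ^*` along an order map, defined by `π_β θ^* = π_{θ∘β}`. -/
def DKpull {m n : ℕ} (θ : SimplexCategory.mk m ⟶ SimplexCategory.mk n) (x : DK Y n) : DK Y m :=
  fun p => DKproj Y (p.1.2 ≫ θ) x

/-- The map `θ' : [m+1] → [n+1]`, `θ'(0)=0`, `θ'(i+1)=θ(i)+1`, on monotone maps. -/
def primeFun {m n : ℕ} (θ : Fin (m + 1) →o Fin (n + 1)) : Fin (m + 2) →o Fin (n + 2) where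
  toFun i := if h : (i : ℕ) = 0 then 0 else
    ⟨((θ ⟨(i : ℕ) - 1, by have := i.isLt; omega⟩ : Fin (n + 1)) : ℕ) + 1, by
      have := (θ ⟨(i : ℕ) - 1, by have := i.isLt; omega⟩).isLt; omega⟩
  monotone' := by
    intro a b hab
    dsimp only
    by_cases ha : (a : ℕ) = 0
    · by_cases hb : (b : ℕ) = 0 <;> simp [ha, hb, Fin.le_def]
    · have hb : (b : ℕ) ≠ 0 := by have := Fin.le_def.mp hab; omega
      rw [dif_neg ha, dif_neg hb]
      have h2 : (⟨(a : ℕ) - 1, by have := a.isLt; omega⟩ : Fin (m + 1)) ≤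
          ⟨(b : ℕ) - 1, by have := b.isLt; omega⟩ := by
        have := Fin.le_def.mp hab; simp [Fin.le_def]; omega
      have := θ.monotone h2
      simp only [Fin.le_def] at this ⊢
      omega

/-- The map `θ' : [m+1] ⟶ [n+1]` in the simplex category. -/
def DKprime {m n : ℕ} (θ : SimplexCategory.mk m ⟶ SimplexCategory.mk n) :
    SimplexCategory.mk (m + 1) ⟶ SimplexCategory.mk (n + 1) :=
  SimplexCategory.mkHom (primeFun θ.toOrderHom)

/-- The zeroth face of `DK(Y)`:
`π_β d_0 = ∂ π_{β'} − Σ_{i=1}^{l+1} (−1)^i π_{β' δ_i}`. -/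
def DKd0 (D : ∀ k, Y (k + 1) →+ Y k) {n : ℕ} (x : DK Y (n + 1)) : DK Y n :=
  fun p =>
    D p.1.1 (DKproj Y (DKprime p.1.2) x) -
      ∑ j : Fin (p.1.1 + 1), ((-1 : ℤ) ^ ((j : ℕ) + 1)) •
        DKproj Y (SimplexCategory.δ j.succ ≫ DKprime p.1.2) x

/-- The degeneracy `u_j` of `DK(Y)`, `π_β u_j = π_{υ_j β}`. -/
def DKu {n : ℕ} (j : Fin (n + 1)) (x : DK Y n) : DK Y (n + 1) :=
  DKpull Y (SimplexCategory.σ j) x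

/-- The subgroup spanned by the degenerate simplices. -/
def Dsub : ∀ n, AddSubgroup (DK Y n)
  | 0 => ⊥
  | (n + 1) => AddSubgroup.closure (⋃ j : Fin (n + 1), Set.range (DKu Y j))

/-- The initial inclusion `σ_k : [k] → [n]`. -/
def initialIncl (k n : ℕ) (h : k ≤ n) : SimplexCategory.mk k ⟶ SimplexCategory.mk n :=
  SimplexCategory.mkHom
    ⟨fun i => ⟨(i : ℕ), by have := i.isLt; omega⟩,
     fun a b hab => by simp only [Fin.le_def] at hab ⊢; omega⟩

/-- The final inclusion `τ_k : [k] → [n]`, `i ↦ i + (n − k)`. -/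
def finalIncl (k n : ℕ) (h : k ≤ n) : SimplexCategory.mk k ⟶ SimplexCategory.mk n :=
  SimplexCategory.mkHom
    ⟨fun i => ⟨(i : ℕ) + (n - k), by have := i.isLt; omega⟩,
     fun a b hab => by simp only [Fin.le_def] at hab ⊢; omega⟩

lemma succAbove_coe {n : ℕ} (i : Fin (n + 2)) (a : Fin (n + 1)) :
    ((i.succAbove a : Fin (n + 2)) : ℕ) =
      if (a : ℕ) < (i : ℕ) then (a : ℕ) else (a : ℕ) + 1 := by
  rw [Fin.succAbove]
  by_cases h : a.castSucc < i
  · simp only [Fin.lt_def, Fin.coe_castSucc] at h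
    rw [if_pos h, if_pos (by simpa [Fin.lt_def])]
    simp
  · simp only [Fin.lt_def, Fin.coe_castSucc, not_lt] at h
    rw [if_neg (by simp [Fin.lt_def]; omega), if_neg (by omega)]
    simp

/-- `x ∈ ker d_i` (for `i > 0`) iff `π_α x = 0` for all indices `α`
not containing `i` in their image. -/
theorem stmt2 (D : ∀ k, Y (k + 1) →+ Y k)
    (hD : ∀ (k : ℕ) (y : Y (k + 2)), D k (D (k + 1) y) = 0)
    (n : ℕ) (i : Fin (n + 2)) (hi : i ≠ 0) (x : DK Y (n + 1)) :
    DKpull Y (SimplexCategory.δ i) x = 0 ↔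
      ∀ p : DKIdx (n + 1), (∀ a, p.1.2.toOrderHom a ≠ i) → x p = 0 := by
  
  have hi1 : 0 < (i : ℕ) := Nat.pos_of_ne_zero (fun e => hi (Fin.ext e))
  constructor
  · intro h
    rintro ⟨⟨k, α⟩, hα⟩ hp
    set g := α.toOrderHom with hg
    have hgne : ∀ a, (g a : ℕ) ≠ (i : ℕ) := fun a e => hp a (Fin.ext e)
    let f : Fin (k + 1) →o Fin (n + 1) :=
      ⟨fun a => ⟨if (g a : ℕ) < (i : ℕ) then (g a : ℕ) else (g a : ℕ) - 1, by
          have h1 : (g a : ℕ) < n + 2 := (g a).isLt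
          have h2 := i.isLt; have h3 := hgne a
          split <;> omega⟩,
        fun a b hab => by
          have hm := g.monotone hab
          have ha := hgne a; have hb := hgne b
          simp only [Fin.le_def] at hm ⊢
          split_ifs <;> omega⟩
    have hfa : ∀ a, ((f a : Fin (n + 1)) : ℕ)
        = if (g a : ℕ) < (i : ℕ) then (g a : ℕ) else (g a : ℕ) - 1 := fun a => rfl
    have hβ : Function.Injective (SimplexCategory.mkHom f).toOrderHom ∧
        (SimplexCategory.mkHom f).toOrderHom 0 = 0 := by
      constructor
      · intro a b hab
        apply hα.1
        apply Fin.ext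
        have this : ((f a : Fin (n + 1)) : ℕ) = ((f b : Fin (n + 1)) : ℕ) :=
          congrArg Fin.val hab
        rw [hfa, hfa] at this
        have ha := hgne a; have hb := hgne b
        split_ifs at this <;> omega
      · apply Fin.ext
        show ((f 0 : Fin (n + 1)) : ℕ) = 0
        rw [hfa]
        have h0 : (g 0 : ℕ) = 0 := congrArg Fin.val hα.2
        rw [h0, if_pos hi1]
    have hcomp : SimplexCategory.mkHom f ≫ SimplexCategory.δ i = α := by
      apply SimplexCategory.Hom.ext
      apply OrderHom.ext
      funext a
      apply Fin.ext
      rw [SimplexCategory.comp_toOrderHom]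
      show ((i.succAbove (f a)) : ℕ) = (g a : ℕ)
      rw [succAbove_coe, hfa]
      have := hgne a
      split_ifs <;> omega
    have h0 : DKproj Y (SimplexCategory.mkHom f ≫ SimplexCategory.δ i) x = 0 :=
      congrFun h ⟨⟨k, SimplexCategory.mkHom f⟩, hβ⟩
    rw [hcomp] at h0
    rw [DKproj, dif_pos hα] at h0
    exact h0
  · intro h
    funext q
    obtain ⟨⟨k, β⟩, hβ⟩ := q
    show DKproj Y (β ≫ SimplexCategory.δ i) x = 0
    have hcond : Function.Injective (β ≫ SimplexCategory.δ i).toOrderHom ∧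
        (β ≫ SimplexCategory.δ i).toOrderHom 0 = 0 := by
      constructor
      · rw [SimplexCategory.comp_toOrderHom]
        exact (Fin.succAbove_right_injective).comp hβ.1
      · rw [SimplexCategory.comp_toOrderHom]
        show i.succAbove (β.toOrderHom 0) = 0
        rw [hβ.2]
        apply Fin.ext
        rw [succAbove_coe]
        simpa using hi1.ne'
    rw [DKproj, dif_pos hcond]
    apply h
    intro a
    rw [SimplexCategory.comp_toOrderHom]
    exact Fin.succAbove_ne i _
end

section
/- With the same setup, an element x ∈ DK(Y)_n lies in the subgroup D_n spanned by the degenerate simplices (the images of all degeneracy maps u_j) if and only if π_{ι_n}(x) = 0, i.e. its component along the top index ι_n : [n] → [n] vanishes. -/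
open CategoryTheory SimplexCategory

variable (Y : ℕ → Type) [∀ k, AddCommGroup (Y k)]

/-! ### Auxiliary lemmas -/

lemma sigma_coe {m : ℕ} (j : Fin (m+1)) (x : Fin (m+2)) :
    (((SimplexCategory.σ j).toOrderHom x : Fin (m+1)) : ℕ)
      = if (x:ℕ) ≤ (j:ℕ) then (x:ℕ) else (x:ℕ) - 1 := by
  show ((Fin.predAbove j x : Fin (m+1)) : ℕ) = _
  unfold Fin.predAbove
  have hl : (j.castSucc < x) ↔ ((j:ℕ) < (x:ℕ)) := by rw [Fin.lt_def]; rfl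
  split_ifs with h1 h2 h2
  · rw [hl] at h1; omega
  · rfl
  · rfl
  · rw [hl] at h1; omega

instance DKIdx.finite (m : ℕ) : Finite (DKIdx m) := by
  have hinj : Function.Injective (fun p : DKIdx m =>
      (⟨⟨p.1.1, by
          have := Fintype.card_le_of_injective _ p.2.1; simp only [SimplexCategory.len_mk, Fintype.card_fin] at this
          omega⟩, fun i => p.1.2.toOrderHom i⟩ :
        Σ k : Fin (m+1), (Fin ((k:ℕ)+1) → Fin (m+1)))) := by
    rintro ⟨⟨k, f⟩, hf⟩ ⟨⟨l, g⟩, hg⟩ h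
    obtain ⟨h1, h2⟩ := Sigma.mk.inj_iff.mp h
    have hkl : k = l := by simpa using congrArg Fin.val h1
    subst hkl
    have h3 : (fun i => f.toOrderHom i) = (fun i => g.toOrderHom i) := eq_of_heq h2
    have h4 : f = g := by
      apply SimplexCategory.Hom.ext
      exact OrderHom.ext _ _ h3
    subst h4
    rfl
  exact Finite.of_injective _ hinj

/-- The weight of an index. -/
def DKwt {m : ℕ} (p : DKIdx m) : ℕ := ∑ i : Fin (p.1.1+1), (p.1.2.toOrderHom i : ℕ)

lemma sigma_eq_cases {m : ℕ} (j : Fin (m+1)) {x y : Fin (m+2)}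
    (h : (SimplexCategory.σ j).toOrderHom x = (SimplexCategory.σ j).toOrderHom y)
    (hy : (y:ℕ) ≠ (j:ℕ)+1) :
    x = y ∨ ((y:ℕ) = (j:ℕ) ∧ (x:ℕ) = (j:ℕ)+1) := by
  have h' := congrArg Fin.val h
  rw [sigma_coe, sigma_coe] at h'
  by_cases hxy : (x:ℕ) = (y:ℕ)
  · exact Or.inl (Fin.ext hxy)
  · right; constructor <;> [skip; skip] <;> (split_ifs at h' <;> omega)

lemma Dsub_succ (n : ℕ) :
    Dsub Y (n+1) = AddSubgroup.closure (⋃ j : Fin (n + 1), Set.range (DKu Y j)) := rfl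

noncomputable local instance (m : ℕ) : DecidableEq (DKIdx m) := fun _ _ => Classical.propDecidable _

lemma DKIdx_eq_elim {m l k : ℕ} {u : SimplexCategory.mk l ⟶ SimplexCategory.mk m}
    {v : SimplexCategory.mk k ⟶ SimplexCategory.mk m}
    {hu : Function.Injective u.toOrderHom ∧ u.toOrderHom 0 = 0}
    {hv : Function.Injective v.toOrderHom ∧ v.toOrderHom 0 = 0}
    (h : (⟨⟨l, u⟩, hu⟩ : DKIdx m) = ⟨⟨k, v⟩, hv⟩) : l = k ∧ HEq u v := by
  have h5 : (⟨l, u⟩ : Σ a : ℕ, SimplexCategory.mk a ⟶ SimplexCategory.mk m) = ⟨k, v⟩ :=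
    congrArg Subtype.val h
  exact Sigma.mk.inj_iff.mp h5

lemma single_apply_eq {m lk : ℕ} {u v : SimplexCategory.mk lk ⟶ SimplexCategory.mk m}
    {hu : Function.Injective u.toOrderHom ∧ u.toOrderHom 0 = 0}
    {hv : Function.Injective v.toOrderHom ∧ v.toOrderHom 0 = 0}
    (h : u = v) (y : Y lk) [DecidableEq (DKIdx m)] :
    Pi.single (M := fun p : DKIdx m => Y p.1.1) ⟨⟨lk, v⟩, hv⟩ y ⟨⟨lk, u⟩, hu⟩ = y := by
  subst h
  exact Pi.single_eq_same (M := fun p : DKIdx m => Y p.1.1) ⟨⟨lk, u⟩, hu⟩ y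

lemma single_mem_Dsub (n : ℕ) : ∀ (d : ℕ) (p : DKIdx (n+1)), p.1.1 ≤ n →
    (p.1.1+1) * (n+1) ≤ DKwt p + d → ∀ y : Y p.1.1, Pi.single p y ∈ Dsub Y (n+1) := by
  classical
  intro d
  induction d with
  | zero =>
    rintro ⟨⟨k, f⟩, hf, h0⟩ hp hw y
    exfalso
    have hwt : DKwt (⟨⟨k, f⟩, hf, h0⟩ : DKIdx (n+1)) ≤ k * (n+1) := by
      show (∑ i : Fin (k+1), (f.toOrderHom i : ℕ)) ≤ k * (n+1)
      rw [← Finset.add_sum_erase _ _ (Finset.mem_univ (0 : Fin (k+1)))]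
      have h00 : (f.toOrderHom 0 : ℕ) = 0 := by simpa using congrArg Fin.val h0
      have hle : ∀ i ∈ Finset.univ.erase (0 : Fin (k+1)), (f.toOrderHom i : ℕ) ≤ n + 1 := by
        intro i _
        have := (f.toOrderHom i).isLt
        simp only [SimplexCategory.len_mk] at this
        omega
      have := Finset.sum_le_card_nsmul _ _ (n+1) hle
      rw [Finset.card_erase_of_mem (Finset.mem_univ _)] at this
      simp only [Finset.card_univ, Fintype.card_fin, smul_eq_mul, Nat.add_sub_cancel] at this
      omega
    have hE : (k+1) * (n+1) = k * (n+1) + (n+1) := by ring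
    have hw' : (k+1) * (n+1) ≤ DKwt (⟨⟨k, f⟩, hf, h0⟩ : DKIdx (n+1)) + 0 := hw
    omega
  | succ d ih =>
    rintro ⟨⟨k, f⟩, hf, h0⟩ hp hw y
    change Y k at y
    have hp' : k ≤ n := hp
    have hw' : (k+1) * (n+1) ≤ DKwt (⟨⟨k, f⟩, hf, h0⟩ : DKIdx (n+1)) + (d+1) := hw
    clear hp hw
    -- choose a value t = j+1 not in the range of f
    have hcard : 0 < (Finset.univ \ Finset.image f.toOrderHom Finset.univ :
        Finset (Fin (n+2))).card := by
      rw [Finset.card_sdiff_of_subset (Finset.subset_univ _),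
        Finset.card_image_of_injective _ hf]
      simp only [Finset.card_univ, SimplexCategory.len_mk, Fintype.card_fin]
      omega
    obtain ⟨t, ht⟩ := Finset.card_pos.mp hcard
    rw [Finset.mem_sdiff] at ht
    have htr : ∀ i : Fin (k+1), f.toOrderHom i ≠ t := fun i hi =>
      ht.2 (Finset.mem_image.mpr ⟨i, Finset.mem_univ i, hi⟩)
    have ht0 : (t:ℕ) ≠ 0 := fun h' => htr 0 (h0.trans (Fin.ext h'.symm))
    have htlt : (t:ℕ) < n + 2 := t.isLt
    obtain ⟨j, hjt⟩ : ∃ j : Fin (n+1), (j:ℕ)+1 = (t:ℕ) :=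
      ⟨⟨(t:ℕ)-1, by omega⟩, by show (t:ℕ)-1+1 = (t:ℕ); omega⟩
    have htne : ∀ i : Fin (k+1), (f.toOrderHom i : ℕ) ≠ (j:ℕ)+1 := by
      intro i hi
      exact htr i (Fin.ext (by omega))
    have hσ0 : ∀ x : Fin (n+2), (x:ℕ) = 0 →
        (((SimplexCategory.σ j).toOrderHom x : Fin (n+1)) : ℕ) = 0 := by
      intro x hx
      rw [sigma_coe]
      split_ifs <;> omega
    have hγ1 : Function.Injective (f ≫ SimplexCategory.σ j).toOrderHom := by
      intro a b hab
      rcases sigma_eq_cases j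
        (show (SimplexCategory.σ j).toOrderHom (f.toOrderHom a)
            = (SimplexCategory.σ j).toOrderHom (f.toOrderHom b) from hab)
        (htne b) with h | h
      · exact hf h
      · exact absurd h.2 (htne a)
    have hγ2 : (f ≫ SimplexCategory.σ j).toOrderHom 0 = 0 :=
      Fin.ext (hσ0 _ (congrArg Fin.val h0))
    -- the generator
    have hgen : DKu Y j (Pi.single (M := fun p : DKIdx n => Y p.1.1) (⟨⟨k, f ≫ SimplexCategory.σ j⟩, hγ1, hγ2⟩ : DKIdx n) y)
        ∈ Dsub Y (n+1) := by
      rw [Dsub_succ]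
      exact AddSubgroup.subset_closure (Set.mem_iUnion.mpr ⟨j, Set.mem_range.mpr ⟨_, rfl⟩⟩)
    -- classification of lifts
    have hclass : ∀ (g : SimplexCategory.mk k ⟶ SimplexCategory.mk (n+1)),
        g.toOrderHom 0 = 0 → g ≫ SimplexCategory.σ j = f ≫ SimplexCategory.σ j →
        ∀ i, g.toOrderHom i = f.toOrderHom i ∨
          ((f.toOrderHom i : ℕ) = (j:ℕ) ∧ (g.toOrderHom i : ℕ) = (j:ℕ)+1 ∧ i ≠ 0) := by
      intro g hg0 hcomp i
      have hpt : (SimplexCategory.σ j).toOrderHom (g.toOrderHom i)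
          = (SimplexCategory.σ j).toOrderHom (f.toOrderHom i) := by
        have : (g ≫ SimplexCategory.σ j).toOrderHom i
            = (f ≫ SimplexCategory.σ j).toOrderHom i := by rw [hcomp]
        exact this
      rcases sigma_eq_cases j hpt (htne i) with h | h
      · exact Or.inl h
      · refine Or.inr ⟨h.1, h.2, ?_⟩
        rintro rfl
        have : (g.toOrderHom 0 : ℕ) = 0 := congrArg Fin.val hg0
        omega
    by_cases hex : ∃ i0 : Fin (k+1), i0 ≠ 0 ∧ (f.toOrderHom i0 : ℕ) = (j:ℕ)
    · -- swap case
      obtain ⟨i0, hi00, hi0⟩ := hex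
      have hi0ne : ∀ c : Fin (k+1), c ≠ i0 → (f.toOrderHom c : ℕ) ≠ (j:ℕ) := by
        intro c hc he
        exact hc (hf (Fin.ext (he.trans hi0.symm)))
      -- the swapped map f'
      have hmono : Monotone (fun i : Fin (k+1) =>
          if i = i0 then (⟨(j:ℕ)+1, by omega⟩ : Fin (n+2)) else f.toOrderHom i) := by
        intro a b hab
        have hab' : (f.toOrderHom a : ℕ) ≤ (f.toOrderHom b : ℕ) := f.toOrderHom.monotone hab
        have habn : (a:ℕ) ≤ (b:ℕ) := hab
        dsimp only
        split_ifs with ha hb hb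
        · exact le_refl _
        · -- a = i0, b ≠ i0 : show j+1 ≤ f b
          subst ha
          have h1 : (f.toOrderHom b : ℕ) ≠ (j:ℕ) := hi0ne b hb
          have h2 : (f.toOrderHom b : ℕ) ≠ (j:ℕ)+1 := htne b
          show (j:ℕ)+1 ≤ (f.toOrderHom b : ℕ)
          omega
        · -- a ≠ i0, b = i0 : f a ≤ j+1
          subst hb
          show (f.toOrderHom a : ℕ) ≤ (j:ℕ)+1
          omega
        · exact f.toOrderHom.monotone hab
      set F' : Fin (k+1) →o Fin (n+2) :=
        ⟨fun i => if i = i0 then (⟨(j:ℕ)+1, by omega⟩ : Fin (n+2)) else f.toOrderHom i, hmono⟩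
        with hF'def
      have hF'eq : ∀ i : Fin (k+1), i ≠ i0 → F' i = f.toOrderHom i := by
        intro i hi
        show (if i = i0 then _ else _) = _
        rw [if_neg hi]
      have hF'i0 : (F' i0 : ℕ) = (j:ℕ)+1 := by
        show (Fin.val (if i0 = i0 then (⟨(j:ℕ)+1, by omega⟩ : Fin (n+2)) else f.toOrderHom i0))
          = (j:ℕ)+1
        rw [if_pos rfl]
      have hf' : Function.Injective (SimplexCategory.mkHom F').toOrderHom := by
        intro a b hab
        replace hab : F' a = F' b := hab
        by_cases ha : a = i0 <;> by_cases hb : b = i0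
        · rw [ha, hb]
        · exfalso
          rw [ha] at hab
          rw [hF'eq b hb] at hab
          exact htne b (by rw [← congrArg Fin.val hab, hF'i0])
        · exfalso
          rw [hb] at hab
          rw [hF'eq a ha] at hab
          exact htne a (by rw [congrArg Fin.val hab, hF'i0])
        · rw [hF'eq a ha, hF'eq b hb] at hab
          exact hf hab
      have hf'0 : (SimplexCategory.mkHom F').toOrderHom 0 = 0 := by
        show F' 0 = 0
        rw [hF'eq 0 (Ne.symm hi00)]
        exact h0
      -- f' ≫ σ j = f ≫ σ j
      have hcompf' : SimplexCategory.mkHom F' ≫ SimplexCategory.σ j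
          = f ≫ SimplexCategory.σ j := by
        apply SimplexCategory.Hom.ext
        apply OrderHom.ext
        funext i
        apply Fin.ext
        show (((SimplexCategory.σ j).toOrderHom (F' i) : Fin (n+1)) : ℕ)
          = (((SimplexCategory.σ j).toOrderHom (f.toOrderHom i) : Fin (n+1)) : ℕ)
        rw [sigma_coe, sigma_coe]
        by_cases hi : i = i0
        · subst hi
          rw [hF'i0, hi0]
          split_ifs <;> omega
        · rw [hF'eq i hi]
      -- weight increases by one
      have hwtf' : DKwt (⟨⟨k, SimplexCategory.mkHom F'⟩, hf', hf'0⟩ : DKIdx (n+1))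
          = DKwt (⟨⟨k, f⟩, hf, h0⟩ : DKIdx (n+1)) + 1 := by
        show (∑ i : Fin (k+1), (F' i : ℕ)) = (∑ i : Fin (k+1), (f.toOrderHom i : ℕ)) + 1
        rw [← Finset.add_sum_erase _ (fun i : Fin (k+1) => ((F' i : Fin (n+2)) : ℕ)) (Finset.mem_univ i0),
          ← Finset.add_sum_erase _ (fun i : Fin (k+1) => ((f.toOrderHom i : Fin (n+2)) : ℕ)) (Finset.mem_univ i0)]
        rw [Finset.sum_congr rfl (fun i hi => by
          rw [hF'eq i (Finset.ne_of_mem_erase hi)])]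
        rw [hF'i0, hi0]
        omega
      -- the decomposition
      have claim : DKu Y j (Pi.single (M := fun p : DKIdx n => Y p.1.1)
            (⟨⟨k, f ≫ SimplexCategory.σ j⟩, hγ1, hγ2⟩ : DKIdx n) y)
          = Pi.single (M := fun p : DKIdx (n+1) => Y p.1.1) (⟨⟨k, f⟩, hf, h0⟩ : DKIdx (n+1)) y
            + Pi.single (M := fun p : DKIdx (n+1) => Y p.1.1)
                (⟨⟨k, SimplexCategory.mkHom F'⟩, hf', hf'0⟩ : DKIdx (n+1)) y := by
        funext r
        obtain ⟨⟨l, g⟩, hg, hg0⟩ := r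
        show _ = Pi.single (M := fun p : DKIdx (n+1) => Y p.1.1) (⟨⟨k, f⟩, hf, h0⟩ : DKIdx (n+1)) y ⟨⟨l, g⟩, hg, hg0⟩
            + Pi.single (M := fun p : DKIdx (n+1) => Y p.1.1) (⟨⟨k, SimplexCategory.mkHom F'⟩, hf', hf'0⟩ : DKIdx (n+1)) y ⟨⟨l, g⟩, hg, hg0⟩
        show DKproj Y (g ≫ SimplexCategory.σ j) _ = _
        unfold DKproj
        split_ifs with hcond
        · by_cases heq : (⟨⟨l, g ≫ SimplexCategory.σ j⟩, hcond⟩ : DKIdx n)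
              = ⟨⟨k, f ≫ SimplexCategory.σ j⟩, hγ1, hγ2⟩
          · obtain ⟨hlk, hh⟩ := DKIdx_eq_elim heq
            subst hlk
            have hcomp : g ≫ SimplexCategory.σ j = f ≫ SimplexCategory.σ j := eq_of_heq hh
            by_cases hgi : (g.toOrderHom i0 : ℕ) = (j:ℕ)+1
            · -- g = f'
              have hgf' : g = SimplexCategory.mkHom F' := by
                apply SimplexCategory.Hom.ext
                apply OrderHom.ext
                funext i
                show g.toOrderHom i = F' i
                by_cases hi : i = i0
                · subst hi
                  exact Fin.ext (by rw [hgi, hF'i0])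
                · rw [hF'eq i hi]
                  rcases hclass g hg0 hcomp i with h | h
                  · exact h
                  · exact absurd (hf (Fin.ext (by rw [h.1, hi0]))) hi
              subst hgf'
              have hne : (⟨⟨l, SimplexCategory.mkHom F'⟩, hg, hg0⟩ : DKIdx (n+1))
                  ≠ ⟨⟨l, f⟩, hf, h0⟩ := by
                intro e
                obtain ⟨-, hh2⟩ := DKIdx_eq_elim e
                have hFf : SimplexCategory.mkHom F' = f := eq_of_heq hh2
                have h9 : (F' i0 : ℕ) = (f.toOrderHom i0 : ℕ) := by rw [← hFf]; rfl
                rw [hF'i0, hi0] at h9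
                omega
              have hz2 : Pi.single (M := fun p : DKIdx (n+1) => Y p.1.1)
                  (⟨⟨l, f⟩, hf, h0⟩ : DKIdx (n+1)) y
                  (⟨⟨l, SimplexCategory.mkHom F'⟩, hg, hg0⟩ : DKIdx (n+1)) = 0 :=
                Pi.single_eq_of_ne (M := fun p : DKIdx (n+1) => Y p.1.1) hne y
              have hz3 : Pi.single (M := fun p : DKIdx (n+1) => Y p.1.1)
                  (⟨⟨l, SimplexCategory.mkHom F'⟩, hf', hf'0⟩ : DKIdx (n+1)) y
                  (⟨⟨l, SimplexCategory.mkHom F'⟩, hg, hg0⟩ : DKIdx (n+1)) = y :=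
                Pi.single_eq_same (M := fun p : DKIdx (n+1) => Y p.1.1) (⟨⟨l, SimplexCategory.mkHom F'⟩, hf', hf'0⟩ : DKIdx (n+1)) y
              rw [hz2, hz3, zero_add]
              exact single_apply_eq Y hcompf' y
            · -- g = f
              have hgf : g = f := by
                apply SimplexCategory.Hom.ext
                apply OrderHom.ext
                funext i
                rcases hclass g hg0 hcomp i with h | h
                · exact h
                · exfalso
                  have hii0 : i = i0 := hf (Fin.ext (by rw [h.1, hi0]))
                  subst hii0
                  exact hgi h.2.1
              subst hgf
              have hne : (⟨⟨l, g⟩, hf, h0⟩ : DKIdx (n+1))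
                  ≠ ⟨⟨l, SimplexCategory.mkHom F'⟩, hf', hf'0⟩ := by
                intro e
                obtain ⟨-, hh2⟩ := DKIdx_eq_elim e
                have hFf : SimplexCategory.mkHom F' = g := (eq_of_heq hh2).symm
                have h9 : (F' i0 : ℕ) = (g.toOrderHom i0 : ℕ) := by rw [← hFf]; rfl
                rw [hF'i0, hi0] at h9
                omega
              have hz2 : Pi.single (M := fun p : DKIdx (n+1) => Y p.1.1)
                  (⟨⟨l, g⟩, hf, h0⟩ : DKIdx (n+1)) y
                  (⟨⟨l, g⟩, hg, hg0⟩ : DKIdx (n+1)) = y :=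
                Pi.single_eq_same (M := fun p : DKIdx (n+1) => Y p.1.1) (⟨⟨l, g⟩, hf, h0⟩ : DKIdx (n+1)) y
              have hz3 : Pi.single (M := fun p : DKIdx (n+1) => Y p.1.1)
                  (⟨⟨l, SimplexCategory.mkHom F'⟩, hf', hf'0⟩ : DKIdx (n+1)) y
                  (⟨⟨l, g⟩, hg, hg0⟩ : DKIdx (n+1)) = 0 :=
                Pi.single_eq_of_ne (M := fun p : DKIdx (n+1) => Y p.1.1) hne y
              rw [hz2, hz3, add_zero]
              exact Pi.single_eq_same (M := fun p : DKIdx n => Y p.1.1)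
                (⟨⟨l, g ≫ SimplexCategory.σ j⟩, hγ1, hγ2⟩ : DKIdx n) y
          · -- index differs from q : everything vanishes
            have hne1 : (⟨⟨l, g⟩, hg, hg0⟩ : DKIdx (n+1)) ≠ ⟨⟨k, f⟩, hf, h0⟩ := by
              intro hrp
              apply heq
              obtain ⟨hlk, hh⟩ := DKIdx_eq_elim hrp
              subst hlk
              have hgf : g = f := eq_of_heq hh
              subst hgf
              rfl
            have hne2 : (⟨⟨l, g⟩, hg, hg0⟩ : DKIdx (n+1))
                ≠ ⟨⟨k, SimplexCategory.mkHom F'⟩, hf', hf'0⟩ := by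
              intro hrp
              apply heq
              obtain ⟨hlk, hh⟩ := DKIdx_eq_elim hrp
              subst hlk
              have hgf : g = SimplexCategory.mkHom F' := eq_of_heq hh
              subst hgf
              exact Subtype.ext (show (⟨l, SimplexCategory.mkHom F' ≫ SimplexCategory.σ j⟩ :
                  Σ a : ℕ, SimplexCategory.mk a ⟶ SimplexCategory.mk n)
                = ⟨l, f ≫ SimplexCategory.σ j⟩ by rw [hcompf'])
            have hz2 : Pi.single (M := fun p : DKIdx (n+1) => Y p.1.1)
                (⟨⟨k, f⟩, hf, h0⟩ : DKIdx (n+1)) y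
                (⟨⟨l, g⟩, hg, hg0⟩ : DKIdx (n+1)) = 0 :=
              Pi.single_eq_of_ne (M := fun p : DKIdx (n+1) => Y p.1.1) hne1 y
            have hz3 : Pi.single (M := fun p : DKIdx (n+1) => Y p.1.1)
                (⟨⟨k, SimplexCategory.mkHom F'⟩, hf', hf'0⟩ : DKIdx (n+1)) y
                (⟨⟨l, g⟩, hg, hg0⟩ : DKIdx (n+1)) = 0 :=
              Pi.single_eq_of_ne (M := fun p : DKIdx (n+1) => Y p.1.1) hne2 y
            rw [hz2, hz3, add_zero]
            exact Pi.single_eq_of_ne (M := fun p : DKIdx n => Y p.1.1) heq y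
        · -- the composition is not an index : everything vanishes
          have hne1 : (⟨⟨l, g⟩, hg, hg0⟩ : DKIdx (n+1)) ≠ ⟨⟨k, f⟩, hf, h0⟩ := by
            intro hrp
            obtain ⟨hlk, hh⟩ := DKIdx_eq_elim hrp
            subst hlk
            have hgf : g = f := eq_of_heq hh
            subst hgf
            exact hcond ⟨hγ1, hγ2⟩
          have hne2 : (⟨⟨l, g⟩, hg, hg0⟩ : DKIdx (n+1))
              ≠ ⟨⟨k, SimplexCategory.mkHom F'⟩, hf', hf'0⟩ := by
            intro hrp
            obtain ⟨hlk, hh⟩ := DKIdx_eq_elim hrp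
            subst hlk
            have hgf : g = SimplexCategory.mkHom F' := eq_of_heq hh
            subst hgf
            refine hcond ?_
            rw [hcompf']
            exact ⟨hγ1, hγ2⟩
          have hz2 : Pi.single (M := fun p : DKIdx (n+1) => Y p.1.1)
              (⟨⟨k, f⟩, hf, h0⟩ : DKIdx (n+1)) y
              (⟨⟨l, g⟩, hg, hg0⟩ : DKIdx (n+1)) = 0 :=
            Pi.single_eq_of_ne (M := fun p : DKIdx (n+1) => Y p.1.1) hne1 y
          have hz3 : Pi.single (M := fun p : DKIdx (n+1) => Y p.1.1)
              (⟨⟨k, SimplexCategory.mkHom F'⟩, hf', hf'0⟩ : DKIdx (n+1)) y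
              (⟨⟨l, g⟩, hg, hg0⟩ : DKIdx (n+1)) = 0 :=
            Pi.single_eq_of_ne (M := fun p : DKIdx (n+1) => Y p.1.1) hne2 y
          rw [hz2, hz3, add_zero]
      -- conclude
      have hdecomp := eq_sub_of_add_eq claim.symm
      rw [hdecomp]
      refine AddSubgroup.sub_mem _ hgen ?_
      refine ih (⟨⟨k, SimplexCategory.mkHom F'⟩, hf', hf'0⟩ : DKIdx (n+1)) hp' ?_ y
      show (k+1)*(n+1) ≤ DKwt (⟨⟨k, SimplexCategory.mkHom F'⟩, hf', hf'0⟩ : DKIdx (n+1)) + d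
      rw [hwtf']
      omega

    · -- no-swap case : the single is itself (essentially) a degenerate element
      have claim : Pi.single (M := fun p : DKIdx (n+1) => Y p.1.1) (⟨⟨k, f⟩, hf, h0⟩ : DKIdx (n+1)) y
          = DKu Y j (Pi.single (M := fun p : DKIdx n => Y p.1.1) (⟨⟨k, f ≫ SimplexCategory.σ j⟩, hγ1, hγ2⟩ : DKIdx n) y) := by
        funext r
        obtain ⟨⟨l, g⟩, hg, hg0⟩ := r
        show _ = DKproj Y (g ≫ SimplexCategory.σ j) _
        unfold DKproj
        split_ifs with hcond
        · by_cases heq : (⟨⟨l, g ≫ SimplexCategory.σ j⟩, hcond⟩ : DKIdx n)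
              = ⟨⟨k, f ≫ SimplexCategory.σ j⟩, hγ1, hγ2⟩
          · obtain ⟨hlk, hh⟩ := DKIdx_eq_elim heq
            subst hlk
            have hcomp : g ≫ SimplexCategory.σ j = f ≫ SimplexCategory.σ j := eq_of_heq hh
            have hgf : g = f := by
              apply SimplexCategory.Hom.ext
              apply OrderHom.ext
              funext i
              rcases hclass g hg0 hcomp i with h | h
              · exact h
              · exact absurd ⟨i, h.2.2, h.1⟩ hex
            subst hgf
            exact (Pi.single_eq_same (M := fun p : DKIdx (n+1) => Y p.1.1)
                (⟨⟨l, g⟩, hf, h0⟩ : DKIdx (n+1)) y).trans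
              ((Pi.single_eq_same (M := fun p : DKIdx n => Y p.1.1)
                (⟨⟨l, g ≫ SimplexCategory.σ j⟩, hγ1, hγ2⟩ : DKIdx n) y).symm)
          · have hne : (⟨⟨l, g⟩, hg, hg0⟩ : DKIdx (n+1)) ≠ ⟨⟨k, f⟩, hf, h0⟩ := by
              intro hrp
              apply heq
              obtain ⟨hlk, hh⟩ := DKIdx_eq_elim hrp
              subst hlk
              have hgf : g = f := eq_of_heq hh
              subst hgf
              rfl
            exact (Pi.single_eq_of_ne (M := fun p : DKIdx (n+1) => Y p.1.1) hne y).trans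
              ((Pi.single_eq_of_ne (M := fun p : DKIdx n => Y p.1.1) heq y).symm)
        · have hne : (⟨⟨l, g⟩, hg, hg0⟩ : DKIdx (n+1)) ≠ ⟨⟨k, f⟩, hf, h0⟩ := by
            intro hrp
            obtain ⟨hlk, hh⟩ := DKIdx_eq_elim hrp
            subst hlk
            have hgf : g = f := eq_of_heq hh
            subst hgf
            exact hcond ⟨hγ1, hγ2⟩
          exact Pi.single_eq_of_ne (M := fun p : DKIdx (n+1) => Y p.1.1) hne y
      rw [claim]
      exact hgen

/-- `x` lies in the subgroup `D_n` spanned by the degenerate simplices iff its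
component along the top index `ι_n : [n] → [n]` vanishes. -/
theorem stmt4 (D : ∀ k, Y (k + 1) →+ Y k)
    (hD : ∀ (k : ℕ) (y : Y (k + 2)), D k (D (k + 1) y) = 0)
    (n : ℕ) (x : DK Y (n + 1)) :
    x ∈ Dsub Y (n + 1) ↔
      x ⟨⟨n + 1, 𝟙 (SimplexCategory.mk (n + 1))⟩,
        ⟨fun a b hab => by simpa using hab, by simp⟩⟩ = 0 := by
  classical
  constructor
  · intro hx
    have hker : Dsub Y (n+1) ≤ (Pi.evalAddMonoidHom (fun p : DKIdx (n+1) => Y p.1.1)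
        ⟨⟨n + 1, 𝟙 (SimplexCategory.mk (n + 1))⟩,
          ⟨fun a b hab => by simpa using hab, by simp⟩⟩).ker := by
      rw [Dsub_succ]
      refine (AddSubgroup.closure_le _).mpr ?_
      rintro z hz
      simp only [Set.mem_iUnion, Set.mem_range] at hz
      obtain ⟨j, w, rfl⟩ := hz
      refine AddMonoidHom.mem_ker.mpr ?_
      show DKproj Y (𝟙 (SimplexCategory.mk (n+1)) ≫ SimplexCategory.σ j) w = 0
      unfold DKproj
      rw [dif_neg]
      rintro ⟨hinj, -⟩
      have e1 : ((j.castSucc : Fin (n+2)) : ℕ) = (j : ℕ) := rfl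
      have e2 : ((j.succ : Fin (n+2)) : ℕ) = (j : ℕ) + 1 := rfl
      have h1 : (SimplexCategory.σ j).toOrderHom j.castSucc
          = (SimplexCategory.σ j).toOrderHom j.succ := by
        apply Fin.ext
        rw [sigma_coe, sigma_coe, e1, e2]
        split_ifs <;> omega
      have h1' : (𝟙 (SimplexCategory.mk (n+1)) ≫ SimplexCategory.σ j).toOrderHom j.castSucc
          = (𝟙 (SimplexCategory.mk (n+1)) ≫ SimplexCategory.σ j).toOrderHom j.succ := h1
      have h2 := congrArg Fin.val (hinj h1')
      rw [e1, e2] at h2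
      omega
    exact AddMonoidHom.mem_ker.mp (hker hx)
  · intro hx
    haveI : Fintype (DKIdx (n+1)) := Fintype.ofFinite _
    have hrep : ∑ p : DKIdx (n+1), Pi.single p (x p) = x := Finset.univ_sum_single x
    rw [← hrep]
    refine AddSubgroup.sum_mem _ ?_
    intro p _
    by_cases hp : p.1.1 = n + 1
    · -- the top index : its component vanishes
      obtain ⟨⟨k, f⟩, hf, h0⟩ := p
      have hk : k = n + 1 := hp
      subst hk
      have hfid : f = 𝟙 (SimplexCategory.mk (n+1)) := by
        have : Mono f := SimplexCategory.mono_iff_injective.mpr hf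
        exact SimplexCategory.eq_id_of_mono f
      subst hfid
      have hx0 : x ⟨⟨n + 1, 𝟙 (SimplexCategory.mk (n + 1))⟩, hf, h0⟩ = 0 := hx
      rw [hx0]
      exact (congrArg (· ∈ Dsub Y (n+1)) (Pi.single_zero _)).mpr (zero_mem _)
    · have hple : p.1.1 ≤ n := by
        have := Fintype.card_le_of_injective _ p.2.1
        simp only [SimplexCategory.len_mk, Fintype.card_fin] at this
        omega
      exact single_mem_Dsub Y n ((p.1.1 + 1) * (n + 1)) p hple (by omega) (x p)
end
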